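/- Let R_1 and R_2 be commutative rings. If R_1 and R_2 each have enough homogeneous polynomials, then the product ring R_1 × R_2 has enough homogeneous polynomials. -/

import Mathlib

/-- A commutative ring `R` has enough homogeneous polynomials if for every `n ≥ 1`
and every finite set `S ⊆ R^n` whose tuples have coprime entries, there is a
nonconstant homogeneous polynomial taking unit values on `S`. -/
def HasEnoughHomogeneousPolynomials (R : Type*) [CommRing R] : Prop :=
  ∀ n : ℕ, 1 ≤ n → ∀ S : Finset (Fin n → R),
    (∀ Q ∈ S, Ideal.span (Set.range Q) = ⊤) →
    ∃ (f : MvPolynomial (Fin n) R) (d : ℕ), 1 ≤ d ∧ f.IsHomogeneous d ∧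
      ∀ Q ∈ S, IsUnit (MvPolynomial.eval Q f)

open MvPolynomial

section Aux

variable {σ R₁ R₂ : Type*} [CommRing R₁] [CommRing R₂]

/-- Pair two polynomials coefficientwise into a polynomial over the product ring. -/
noncomputable def pairPoly (p : MvPolynomial σ R₁) (q : MvPolynomial σ R₂) :
    MvPolynomial σ (R₁ × R₂) :=
  (AddMonoidAlgebra.coeff p).sum (fun m a => monomial m (a, (0 : R₂))) + (AddMonoidAlgebra.coeff q).sum (fun m b => monomial m ((0 : R₁), b))

lemma coeff_pairPoly (p : MvPolynomial σ R₁) (q : MvPolynomial σ R₂) (m : σ →₀ ℕ) :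
    coeff m (pairPoly p q) = (coeff m p, coeff m q) := by
  classical
  have h1 : coeff m ((AddMonoidAlgebra.coeff p).sum (fun m a => monomial m (a, (0 : R₂)))) = (coeff m p, 0) := by
    rw [sum_def, coeff_sum]
    simp only [coeff_monomial]
    rw [Finset.sum_ite_eq']
    split_ifs with h
    · rfl
    · rw [MvPolynomial.notMem_support_iff.mp h]; rfl
  have h2 : coeff m ((AddMonoidAlgebra.coeff q).sum (fun m b => monomial m ((0 : R₁), b))) = (0, coeff m q) := by
    rw [sum_def, coeff_sum]
    simp only [coeff_monomial]
    rw [Finset.sum_ite_eq']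
    split_ifs with h
    · rfl
    · rw [MvPolynomial.notMem_support_iff.mp h]; rfl
  rw [pairPoly, coeff_add, h1, h2, Prod.mk_add_mk, add_zero, zero_add]

lemma map_fst_pairPoly (p : MvPolynomial σ R₁) (q : MvPolynomial σ R₂) :
    map (RingHom.fst R₁ R₂) (pairPoly p q) = p := by
  ext m; simp [coeff_map, coeff_pairPoly]

lemma map_snd_pairPoly (p : MvPolynomial σ R₁) (q : MvPolynomial σ R₂) :
    map (RingHom.snd R₁ R₂) (pairPoly p q) = q := by
  ext m; simp [coeff_map, coeff_pairPoly]

lemma pairPoly_isHomogeneous {p : MvPolynomial σ R₁} {q : MvPolynomial σ R₂} {d : ℕ}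
    (hp : p.IsHomogeneous d) (hq : q.IsHomogeneous d) :
    (pairPoly p q).IsHomogeneous d := by
  intro m hm
  rw [coeff_pairPoly] at hm
  by_cases h1 : coeff m p ≠ 0
  · exact hp h1
  · push_neg at h1
    have h2 : coeff m q ≠ 0 := by
      intro h2; exact hm (by rw [h1, h2]; rfl)
    exact hq h2

lemma eval_pairPoly (p : MvPolynomial σ R₁) (q : MvPolynomial σ R₂) (Q : σ → R₁ × R₂) :
    eval Q (pairPoly p q)
      = (eval (Prod.fst ∘ Q) p, eval (Prod.snd ∘ Q) q) := by
  have hfst : (eval Q (pairPoly p q)).1 = eval (Prod.fst ∘ Q) p := by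
    have := eval₂_comp_left (RingHom.fst R₁ R₂) (RingHom.id (R₁ × R₂)) Q (pairPoly p q)
    rw [eval₂_eq_eval_map, map_id] at this
    rw [show (eval Q (pairPoly p q)).1 = (RingHom.fst R₁ R₂) (eval Q (pairPoly p q)) from rfl,
      this, RingHom.comp_id, eval₂_eq_eval_map, map_fst_pairPoly]; rfl
  have hsnd : (eval Q (pairPoly p q)).2 = eval (Prod.snd ∘ Q) q := by
    have := eval₂_comp_left (RingHom.snd R₁ R₂) (RingHom.id (R₁ × R₂)) Q (pairPoly p q)
    rw [eval₂_eq_eval_map, map_id] at this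
    rw [show (eval Q (pairPoly p q)).2 = (RingHom.snd R₁ R₂) (eval Q (pairPoly p q)) from rfl,
      this, RingHom.comp_id, eval₂_eq_eval_map, map_snd_pairPoly]; rfl
  exact Prod.ext hfst hsnd

lemma isUnit_prod {x : R₁ × R₂} (h1 : IsUnit x.1) (h2 : IsUnit x.2) : IsUnit x := by
  obtain ⟨a, ha⟩ := h1
  obtain ⟨b, hb⟩ := h2
  refine IsUnit.of_mul_eq_one (a := x) ((↑a⁻¹ : R₁), (↑b⁻¹ : R₂)) (Prod.ext ?_ ?_)
  · show x.1 * ↑a⁻¹ = 1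
    rw [← ha]; exact a.mul_inv
  · show x.2 * ↑b⁻¹ = 1
    rw [← hb]; exact b.mul_inv

lemma span_range_comp_top {n : ℕ} {R S : Type*} [CommRing R] [CommRing S]
    (f : R →+* S) (Q : Fin n → R) (h : Ideal.span (Set.range Q) = ⊤) :
    Ideal.span (Set.range (f ∘ Q)) = ⊤ := by
  rw [Set.range_comp, ← Ideal.map_span, h, Ideal.map_top]

end Aux

/-- If `R₁` and `R₂` have enough homogeneous polynomials, so does `R₁ × R₂`. -/
theorem prod_hasEnoughHomogeneousPolynomials
    (R₁ R₂ : Type*) [CommRing R₁] [CommRing R₂]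
    (h₁ : HasEnoughHomogeneousPolynomials R₁)
    (h₂ : HasEnoughHomogeneousPolynomials R₂) :
    HasEnoughHomogeneousPolynomials (R₁ × R₂) := by
  classical
  intro n hn S hS
  obtain ⟨f₁, d₁, hd₁, hh₁, hu₁⟩ := h₁ n hn (S.image (fun Q => Prod.fst ∘ Q)) (by
    intro Q₁ hQ₁
    obtain ⟨Q, hQ, rfl⟩ := Finset.mem_image.mp hQ₁
    exact span_range_comp_top (RingHom.fst R₁ R₂) Q (hS Q hQ))
  obtain ⟨f₂, d₂, hd₂, hh₂, hu₂⟩ := h₂ n hn (S.image (fun Q => Prod.snd ∘ Q)) (by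
    intro Q₂ hQ₂
    obtain ⟨Q, hQ, rfl⟩ := Finset.mem_image.mp hQ₂
    exact span_range_comp_top (RingHom.snd R₁ R₂) Q (hS Q hQ))
  refine ⟨pairPoly (f₁ ^ d₂) (f₂ ^ d₁), d₁ * d₂, Nat.one_le_iff_ne_zero.mpr
      (Nat.mul_ne_zero (Nat.one_le_iff_ne_zero.mp hd₁) (Nat.one_le_iff_ne_zero.mp hd₂)),
    pairPoly_isHomogeneous (hh₁.pow d₂) (by simpa [mul_comm] using hh₂.pow d₁), ?_⟩
  intro Q hQ
  rw [eval_pairPoly]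
  refine isUnit_prod ?_ ?_
  · simpa [map_pow] using (hu₁ (Prod.fst ∘ Q) (Finset.mem_image_of_mem _ hQ)).pow d₂
  · simpa [map_pow] using (hu₂ (Prod.snd ∘ Q) (Finset.mem_image_of_mem _ hQ)).pow d₁
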